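/- Let k be a positive integer with k = ⌊p⌋ for a real p > 1. Then there exists a constant C > 0 (independent of a, b) such that for all real a > 0 and all real b, |-(max(a+b,0))^p + a^p + p a^{p-1} b + ... + (p(p-1)...(p-k+1)/k!) a^{p-k} b^k| ≤ C |b|^p. -/

import Mathlib

open Real Finset

/-- The remainder function. -/
noncomputable def Rm (p : ℝ) (k : ℕ) (a b : ℝ) : ℝ :=
  -(max (a + b) 0 ^ p) + ∑ j ∈ Finset.range (k + 1),
      ((∏ m ∈ Finset.range j, (p - (m : ℝ))) / (Nat.factorial j : ℝ)) *
        a ^ (p - (j : ℝ)) * b ^ j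

lemma Rm_zero (p : ℝ) (k : ℕ) (a : ℝ) (ha : 0 < a) : Rm p k a 0 = 0 := by
  unfold Rm
  rw [Finset.sum_eq_single_of_mem 0 (by simp)]
  · simp [max_eq_left ha.le]
  · intro j _ hj
    simp [zero_pow hj]

/-- Derivative of `x ↦ x₊ ^ p` for `p > 1`. -/
lemma hasDerivAt_posrpow {p : ℝ} (hp : 1 < p) (x : ℝ) :
    HasDerivAt (fun x : ℝ => max x 0 ^ p) (p * max x 0 ^ (p - 1)) x := by
  rcases lt_trichotomy x 0 with hx | rfl | hx
  · have h0 : (fun x : ℝ => max x 0 ^ p) =ᶠ[nhds x] fun _ => (0:ℝ)^p := by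
      filter_upwards [eventually_lt_nhds hx] with y hy
      rw [max_eq_right hy.le]
    rw [max_eq_right hx.le]
    simpa [Real.zero_rpow (show p - 1 ≠ 0 from ne_of_gt (by linarith))] using
      (hasDerivAt_const x ((0:ℝ)^p)).congr_of_eventuallyEq h0
  · rw [hasDerivAt_iff_isLittleO]
    simp only [max_self, Real.zero_rpow (show p ≠ 0 from ne_of_gt (by linarith)),
      Real.zero_rpow (show p - 1 ≠ 0 from ne_of_gt (by linarith)), mul_zero, smul_zero, sub_zero]
    rw [Asymptotics.isLittleO_iff]
    intro c hc
    have hd : (0:ℝ) < c ^ (1 / (p - 1)) := Real.rpow_pos_of_pos hc _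
    filter_upwards [Metric.ball_mem_nhds (0:ℝ) hd] with y hy
    rw [Metric.mem_ball, Real.dist_eq, sub_zero] at hy
    have h1 : max y 0 ^ p ≤ |y| ^ p :=
      Real.rpow_le_rpow (le_max_right _ _) (max_le (le_abs_self y) (abs_nonneg y)) (by linarith)
    have h3 : |y| ^ (p - 1) ≤ c := by
      calc |y| ^ (p - 1) ≤ (c ^ (1 / (p - 1))) ^ (p - 1) :=
            Real.rpow_le_rpow (abs_nonneg y) hy.le (by linarith)
        _ = c := by
            rw [← Real.rpow_mul hc.le, one_div_mul_cancel (show p - 1 ≠ 0 from ne_of_gt (by linarith)),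
              Real.rpow_one]
    have h4 : (0:ℝ) ≤ max y 0 ^ p := Real.rpow_nonneg (le_max_right _ _) _
    rw [Real.norm_eq_abs, Real.norm_eq_abs, abs_of_nonneg h4]
    calc max y 0 ^ p ≤ |y| ^ p := h1
      _ = |y| ^ (p - 1) * |y| ^ (1:ℝ) := by
          rw [← Real.rpow_add' (abs_nonneg y) (show p - 1 + 1 ≠ 0 by
            ring_nf; exact ne_of_gt (by linarith))]
          norm_num
      _ ≤ c * |y| := by
          rw [Real.rpow_one]
          exact mul_le_mul_of_nonneg_right h3 (abs_nonneg y)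
  · have h0 : (fun x : ℝ => max x 0 ^ p) =ᶠ[nhds x] fun x => x ^ p := by
      filter_upwards [eventually_gt_nhds hx] with y hy
      rw [max_eq_left hy.le]
    rw [max_eq_left hx.le]
    exact (Real.hasDerivAt_rpow_const (Or.inl hx.ne')).congr_of_eventuallyEq h0

/-- Derivative of the remainder in `b`. -/
lemma hasDerivAt_Rm {p : ℝ} (hp : 1 < p) (k : ℕ) (a b : ℝ) :
    HasDerivAt (fun b => Rm p (k + 1) a b) (p * Rm (p - 1) k a b) b := by
  have hmax : HasDerivAt (fun b : ℝ => max (a + b) 0 ^ p)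
      (p * max (a + b) 0 ^ (p - 1)) b := by
    have := (hasDerivAt_posrpow hp (a + b)).comp b ((hasDerivAt_id b).const_add a)
    rw [mul_one] at this
    exact this
  have hsum : HasDerivAt (fun b : ℝ => ∑ j ∈ Finset.range (k + 2),
      ((∏ m ∈ Finset.range j, (p - (m : ℝ))) / (Nat.factorial j : ℝ)) *
        a ^ (p - (j : ℝ)) * b ^ j)
      (∑ j ∈ Finset.range (k + 2),
        ((∏ m ∈ Finset.range j, (p - (m : ℝ))) / (Nat.factorial j : ℝ)) *
          a ^ (p - (j : ℝ)) * ((j : ℝ) * b ^ (j - 1))) b := by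
    apply HasDerivAt.fun_sum
    intro j _
    exact (hasDerivAt_pow j b).const_mul _
  have key : (∑ j ∈ Finset.range (k + 2),
        ((∏ m ∈ Finset.range j, (p - (m : ℝ))) / (Nat.factorial j : ℝ)) *
          a ^ (p - (j : ℝ)) * ((j : ℝ) * b ^ (j - 1)))
      = p * ∑ j ∈ Finset.range (k + 1),
        ((∏ m ∈ Finset.range j, ((p - 1) - (m : ℝ))) / (Nat.factorial j : ℝ)) *
          a ^ ((p - 1) - (j : ℝ)) * b ^ j := by
    rw [Finset.sum_range_succ']
    simp only [Nat.cast_zero, zero_mul, mul_zero, add_zero]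
    rw [Finset.mul_sum]
    apply Finset.sum_congr rfl
    intro j _
    have e1 : (p - ((j + 1 : ℕ) : ℝ)) = (p - 1) - (j : ℝ) := by push_cast; ring
    have e2 : ∏ m ∈ Finset.range (j + 1), (p - (m : ℝ))
        = p * ∏ m ∈ Finset.range j, ((p - 1) - (m : ℝ)) := by
      rw [Finset.prod_range_succ']
      simp only [Nat.cast_zero, sub_zero]
      rw [mul_comm]
      congr 1
      apply Finset.prod_congr rfl
      intro m _
      push_cast; ring
    rw [e1, e2, Nat.factorial_succ]
    have hj1 : ((j:ℝ) + 1) ≠ 0 := by positivity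
    have hjf : ((Nat.factorial j : ℕ) : ℝ) ≠ 0 := by
      exact_mod_cast (Nat.factorial_pos j).ne'
    push_cast
    field_simp
  have := hmax.neg.add hsum
  rw [key] at this
  convert this using 1
  all_goals first | rfl | (unfold Rm; ring)

lemma one_sided {q M : ℝ} (hq : 0 < q) {f f' : ℝ → ℝ} (h0 : f 0 = 0)
    (hd : ∀ t, HasDerivAt f (f' t) t)
    (hb : ∀ t, 0 < t → f' t ≤ M * t ^ (q - 1)) {b : ℝ} (hbp : 0 ≤ b) :
    f b ≤ (M / q) * b ^ q := by
  set g : ℝ → ℝ := fun t => (M / q) * t ^ q - f t with hgdef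
  have hgd : ∀ t ∈ Set.Ioo (0:ℝ) b, HasDerivAt g (M * t ^ (q - 1) - f' t) t := by
    intro t ht
    have h1 : HasDerivAt (fun t : ℝ => (M / q) * t ^ q) ((M / q) * (q * t ^ (q - 1))) t :=
      (Real.hasDerivAt_rpow_const (Or.inl ht.1.ne')).const_mul _
    have h2 := h1.sub (hd t)
    have : (M / q) * (q * t ^ (q - 1)) = M * t ^ (q - 1) := by
      field_simp
    rwa [this] at h2
  have hcont : ContinuousOn g (Set.Icc 0 b) := by
    apply ContinuousOn.sub
    · exact (continuous_const.mul (Real.continuous_rpow_const hq.le)).continuousOn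
    · exact fun t _ => ((hd t).continuousAt).continuousWithinAt
  have hmono : MonotoneOn g (Set.Icc 0 b) := by
    apply monotoneOn_of_deriv_nonneg (convex_Icc 0 b) hcont
    · intro t ht
      rw [interior_Icc] at ht
      exact ((hgd t ht).differentiableAt).differentiableWithinAt
    · intro t ht
      rw [interior_Icc] at ht
      rw [(hgd t ht).deriv]
      have := hb t ht.1
      linarith
  have h00 : g 0 = 0 := by
    simp [hgdef, h0, Real.zero_rpow hq.ne']
  have := hmono (Set.left_mem_Icc.2 hbp) (Set.right_mem_Icc.2 hbp) hbp
  rw [h00] at this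
  simp only [hgdef] at this
  linarith

lemma nonneg_case {q M : ℝ} (hq : 0 < q) {f f' : ℝ → ℝ} (h0 : f 0 = 0)
    (hd : ∀ t, HasDerivAt f (f' t) t)
    (hb : ∀ t, |f' t| ≤ M * |t| ^ (q - 1)) {b : ℝ} (hbp : 0 ≤ b) :
    |f b| ≤ (M / q) * b ^ q := by
  have hb1 : ∀ t, 0 < t → f' t ≤ M * t ^ (q - 1) := by
    intro t ht
    have := hb t
    rw [abs_of_pos ht] at this
    exact le_trans (le_abs_self _) this
  have hb2 : ∀ t, 0 < t → -f' t ≤ M * t ^ (q - 1) := by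
    intro t ht
    have := hb t
    rw [abs_of_pos ht] at this
    exact le_trans (neg_le_abs _) this
  rw [abs_le]
  constructor
  · have := one_sided hq (f := fun t => -f t) (f' := fun t => -f' t)
      (by simp [h0]) (fun t => (hd t).neg) hb2 hbp
    linarith
  · exact one_sided hq h0 hd hb1 hbp

lemma abs_le_of_deriv {q M : ℝ} (hq : 0 < q) {f f' : ℝ → ℝ} (h0 : f 0 = 0)
    (hd : ∀ t, HasDerivAt f (f' t) t)
    (hb : ∀ t, |f' t| ≤ M * |t| ^ (q - 1)) (b : ℝ) :
    |f b| ≤ (M / q) * |b| ^ q := by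
  rcases le_total 0 b with hbp | hbn
  · rw [abs_of_nonneg hbp]
    exact nonneg_case hq h0 hd hb hbp
  · have hd' : ∀ t, HasDerivAt (fun t => f (-t)) (f' (-t) * (-1)) t := by
      intro t
      exact (hd (-t)).comp t ((hasDerivAt_id t).neg)
    have hb' : ∀ t, |f' (-t) * (-1)| ≤ M * |t| ^ (q - 1) := by
      intro t
      rw [abs_mul, abs_neg, abs_one, mul_one, ← abs_neg t]
      exact hb (-t)
    have := nonneg_case hq (f := fun t => f (-t)) (f' := fun t => f' (-t) * (-1))
      (by simp [h0]) hd' hb' (b := -b) (neg_nonneg.2 hbn)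
    rw [abs_of_nonpos hbn]
    simpa using this

lemma rpow_subadd {p : ℝ} (hp0 : 0 ≤ p) (hp1 : p ≤ 1) {x y : ℝ} (hx : 0 ≤ x) (hy : 0 ≤ y) :
    (x + y) ^ p ≤ x ^ p + y ^ p := by
  have h := NNReal.rpow_add_le_add_rpow x.toNNReal y.toNNReal hp0 hp1
  rw [← Real.toNNReal_add hx hy] at h
  have h2 := NNReal.coe_le_coe.2 h
  rwa [NNReal.coe_add, NNReal.coe_rpow, NNReal.coe_rpow, NNReal.coe_rpow,
    Real.coe_toNNReal _ (add_nonneg hx hy), Real.coe_toNNReal _ hx,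
    Real.coe_toNNReal _ hy] at h2

lemma holder_aux {p : ℝ} (hp0 : 0 < p) (hp1 : p ≤ 1) {x y : ℝ} (hy : 0 ≤ y) (h : y ≤ x) :
    |x ^ p - y ^ p| ≤ |x - y| ^ p := by
  rw [abs_of_nonneg (sub_nonneg.2 (Real.rpow_le_rpow hy h hp0.le)),
    abs_of_nonneg (sub_nonneg.2 h)]
  have hsub : x ^ p ≤ (x - y) ^ p + y ^ p := by
    calc x ^ p = ((x - y) + y) ^ p := by ring_nf
      _ ≤ _ := rpow_subadd hp0.le hp1 (sub_nonneg.2 h) hy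
  linarith

lemma holder {p : ℝ} (hp0 : 0 < p) (hp1 : p ≤ 1) {x y : ℝ} (hx : 0 ≤ x) (hy : 0 ≤ y) :
    |x ^ p - y ^ p| ≤ |x - y| ^ p := by
  rcases le_total y x with h | h
  · exact holder_aux hp0 hp1 hy h
  · rw [abs_sub_comm, abs_sub_comm x y]
    exact holder_aux hp0 hp1 hx h

lemma key_ind : ∀ (k : ℕ) (p : ℝ), (k : ℝ) < p → p ≤ (k : ℝ) + 1 → ∀ a b : ℝ, 0 < a →
    |Rm p k a b| ≤ |b| ^ p := by
  intro k
  induction k with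
  | zero =>
    intro p hp0 hp1 a b ha
    rw [Nat.cast_zero] at hp0 hp1
    rw [zero_add] at hp1
    have hR : Rm p 0 a b = a ^ p - max (a + b) 0 ^ p := by
      unfold Rm
      rw [Finset.sum_range_one]
      norm_num
      ring
    rw [hR]
    have h1 : |a ^ p - max (a + b) 0 ^ p| ≤ |a - max (a + b) 0| ^ p :=
      holder hp0 hp1 ha.le (le_max_right _ _)
    have h2 : |a - max (a + b) 0| ≤ |b| := by
      have := abs_max_sub_max_le_abs a (a + b) 0
      rw [max_eq_left ha.le] at this
      calc |a - max (a + b) 0| ≤ |a - (a + b)| := this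
        _ = |b| := by rw [show a - (a+b) = -b by ring, abs_neg]
    exact le_trans h1 (Real.rpow_le_rpow (abs_nonneg _) h2 hp0.le)
  | succ k ih =>
    intro p hp0 hp1 a b ha
    rw [Nat.cast_add, Nat.cast_one] at hp0 hp1
    have hknn : (0:ℝ) ≤ (k:ℝ) := Nat.cast_nonneg k
    have hp1' : 1 < p := by linarith
    have ihp : ∀ t : ℝ, |Rm (p - 1) k a t| ≤ |t| ^ (p - 1) := by
      intro t
      exact ih (p - 1) (by linarith) (by linarith) a t ha
    have hb : ∀ t : ℝ, |p * Rm (p - 1) k a t| ≤ p * |t| ^ (p - 1) := by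
      intro t
      rw [abs_mul, abs_of_pos (by linarith : (0:ℝ) < p)]
      exact mul_le_mul_of_nonneg_left (ihp t) (by linarith)
    have := abs_le_of_deriv (by linarith : (0:ℝ) < p)
      (f := fun b => Rm p (k + 1) a b) (f' := fun t => p * Rm (p - 1) k a t)
      (Rm_zero p (k+1) a ha) (fun t => hasDerivAt_Rm hp1' k a t) hb b
    rwa [div_self (by linarith : p ≠ 0), one_mul] at this

lemma prod_cast_descFactorial (k : ℕ) : ∀ j : ℕ, j ≤ k →
    ∏ m ∈ Finset.range j, ((k:ℝ) - (m:ℝ)) = (k.descFactorial j : ℝ) := by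
  intro j
  induction j with
  | zero => simp
  | succ j ih =>
    intro hjk
    rw [Finset.prod_range_succ, ih (by omega), Nat.descFactorial_succ]
    rw [Nat.cast_mul, Nat.cast_sub (by omega : j ≤ k)]
    ring

lemma int_case (k : ℕ) (hk : 1 ≤ k) (a b : ℝ) (ha : 0 < a) :
    |Rm (k:ℝ) k a b| ≤ |b| ^ ((k:ℝ)) := by
  have hsum : ∑ j ∈ Finset.range (k + 1),
      ((∏ m ∈ Finset.range j, ((k:ℝ) - (m : ℝ))) / (Nat.factorial j : ℝ)) *
        a ^ ((k:ℝ) - (j : ℝ)) * b ^ j = (a + b) ^ k := by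
    rw [add_comm a b, add_pow]
    apply Finset.sum_congr rfl
    intro j hj
    rw [Finset.mem_range] at hj
    have hjk : j ≤ k := by omega
    rw [prod_cast_descFactorial k j hjk, Nat.descFactorial_eq_factorial_mul_choose,
      show (k:ℝ) - (j:ℝ) = ((k - j : ℕ) : ℝ) by rw [Nat.cast_sub hjk],
      Real.rpow_natCast]
    have hjf : ((Nat.factorial j : ℕ) : ℝ) ≠ 0 := by
      exact_mod_cast (Nat.factorial_pos j).ne'
    push_cast
    field_simp
  unfold Rm
  rw [hsum]
  rcases le_or_gt 0 (a + b) with hab | hab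
  · rw [max_eq_left hab, Real.rpow_natCast (a + b) k, Real.rpow_natCast |b| k,
      neg_add_cancel, abs_zero]
    positivity
  · rw [max_eq_right hab.le,
      Real.zero_rpow (show ((k:ℕ):ℝ) ≠ 0 by exact_mod_cast Nat.one_le_iff_ne_zero.1 hk),
      Real.rpow_natCast |b| k, neg_zero, zero_add]
    have h1 : |a + b| ≤ |b| := by
      rw [abs_of_neg hab, abs_of_neg (show b < 0 by linarith)]
      linarith
    calc |(a + b) ^ k| = |a + b| ^ k := abs_pow _ _
      _ ≤ |b| ^ k := pow_le_pow_left₀ (abs_nonneg _) h1 k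

/-- Taylor-type estimate for `t ↦ t₊^p` at order `k = ⌊p⌋`. -/
theorem stmt0 (p : ℝ) (hp : 1 < p) (k : ℕ) (hk : k = ⌊p⌋₊) :
    ∃ C > 0, ∀ a b : ℝ, 0 < a →
      |(-(max (a + b) 0 ^ p)) + ∑ j ∈ Finset.range (k + 1),
          ((∏ m ∈ Finset.range j, (p - (m : ℝ))) / (Nat.factorial j : ℝ)) *
            a ^ (p - (j : ℝ)) * b ^ j|
        ≤ C * |b| ^ p := by
  refine ⟨1, one_pos, fun a b ha => ?_⟩
  rw [one_mul]
  have hfloor_le : (k : ℝ) ≤ p := by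
    rw [hk]
    exact Nat.floor_le (by linarith)
  have hlt : p < (k : ℝ) + 1 := by
    rw [hk]
    exact_mod_cast Nat.lt_floor_add_one p
  have hmain : |Rm p k a b| ≤ |b| ^ p := by
    rcases eq_or_lt_of_le hfloor_le with heq | hltk
    · have hk1 : 1 ≤ k := by
        have : (1:ℝ) < (k:ℝ) := by rw [heq]; exact hp
        exact_mod_cast this.le
      rw [← heq]
      exact int_case k hk1 a b ha
    · exact key_ind k p hltk hlt.le a b ha
  exact hmain
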